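/- Let S = ⟨m_1,…,m_n⟩ ⊆ ℕ be a numerical semigroup minimally generated by an arithmetic sequence of relatively prime integers m_1 < ⋯ < m_n, i.e., m_i = m_1 + (i−1)e for all i ∈ {2,…,n} with gcd(m_1, e) = 1. Then L_S = { 2m_1 + λe : 2 ≤ λ ≤ 2n − 4 } + S. -/

import Mathlib

/-- The `S`-degree of an exponent vector. -/
def degS {n : ℕ} {G : Type*} [AddCommMonoid G] (a : Fin n → G) (lam : Fin n → ℕ) : G :=
  ∑ i, lam i • a i

/-- The set of elements of `S = ⟨a_1,…,a_n⟩` having at least two different factorizations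
of the same length. -/
def LSet {n : ℕ} {G : Type*} [AddCommMonoid G] (a : Fin n → G) : Set G :=
  {x | ∃ lam nu : Fin n → ℕ, lam ≠ nu ∧ degS a lam = x ∧ degS a nu = x ∧
    ∑ i, lam i = ∑ i, nu i}

namespace LSetAux

variable {n : ℕ}

def uv (j : Fin n) : Fin n → ℕ := fun i => if i = j then 1 else 0

lemma sum_uv (j : Fin n) : ∑ i, uv j i = 1 := by simp [uv]

lemma sum_t_uv (j : Fin n) : ∑ i : Fin n, (i : ℕ) * uv j i = (j : ℕ) := by
  simp [uv, mul_ite]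

lemma deg_add (m : Fin n → ℕ) (μ ν : Fin n → ℕ) :
    degS m (μ + ν) = degS m μ + degS m ν := by
  simp [degS, add_smul, add_mul, Finset.sum_add_distrib]

lemma deg_uv (m : Fin n → ℕ) (j : Fin n) : degS m (uv j) = m j := by
  simp [degS, uv, ite_smul]

lemma deg_eq (m : Fin n → ℕ) (m0 e : ℕ) (hm : ∀ i : Fin n, m i = m0 + (i : ℕ) * e)
    (μ : Fin n → ℕ) :
    degS m μ = (∑ i, μ i) * m0 + (∑ i : Fin n, (i : ℕ) * μ i) * e := by
  unfold degS
  simp only [smul_eq_mul]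
  rw [Finset.sum_mul, Finset.sum_mul, ← Finset.sum_add_distrib]
  refine Finset.sum_congr rfl fun i _ => ?_
  rw [hm i]; ring

lemma deg_mem (m : Fin n → ℕ) (μ : Fin n → ℕ) :
    degS m μ ∈ AddSubmonoid.closure (Set.range m) :=
  AddSubmonoid.sum_mem _ fun i _ =>
    nsmul_mem (AddSubmonoid.subset_closure (Set.mem_range_self i)) _

lemma exists_deg (m : Fin n → ℕ) {y : ℕ} (hy : y ∈ AddSubmonoid.closure (Set.range m)) :
    ∃ μ : Fin n → ℕ, degS m μ = y := by
  induction hy using AddSubmonoid.closure_induction with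
  | mem x hx =>
      obtain ⟨j, rfl⟩ := hx
      exact ⟨uv j, deg_uv m j⟩
  | zero => exact ⟨0, by simp [degS]⟩
  | add x y _ _ hx hy =>
      obtain ⟨μ, hμ⟩ := hx; obtain ⟨ν, hν⟩ := hy
      exact ⟨μ + ν, by rw [deg_add, hμ, hν]⟩

lemma eq_of_small_support (μ ν : Fin n → ℕ)
    (hμ : ∀ j : Fin n, 2 ≤ (j : ℕ) → μ j = 0)
    (hν : ∀ j : Fin n, 2 ≤ (j : ℕ) → ν j = 0)
    (hs : ∑ i, μ i = ∑ i, ν i)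
    (ht : ∑ i : Fin n, (i : ℕ) * μ i = ∑ i : Fin n, (i : ℕ) * ν i) : μ = ν := by
  have key1 : ∀ (ρ : Fin n → ℕ), (∀ j : Fin n, 2 ≤ (j : ℕ) → ρ j = 0) →
      ∀ i : Fin n, (i : ℕ) = 1 → ∑ j : Fin n, (j : ℕ) * ρ j = ρ i := by
    intro ρ hρ i hi
    rw [Finset.sum_eq_single i]
    · rw [hi, one_mul]
    · intro b _ hb
      rcases Nat.lt_or_ge (b : ℕ) 2 with h | h
      · have hb0 : (b : ℕ) = 0 := by
          have : (b : ℕ) = 0 ∨ (b : ℕ) = 1 := by omega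
          rcases this with h0 | h1
          · exact h0
          · exact absurd (Fin.val_injective (h1.trans hi.symm)) hb
        rw [hb0, zero_mul]
      · rw [hρ b h, mul_zero]
    · exact fun h => absurd (Finset.mem_univ i) h
  have key0 : ∀ (ρ : Fin n → ℕ), (∀ j : Fin n, 2 ≤ (j : ℕ) → ρ j = 0) →
      ∀ i : Fin n, (i : ℕ) = 0 → ∑ j, ρ j = ρ i + ∑ j : Fin n, (j : ℕ) * ρ j := by
    intro ρ hρ i hi
    have step : ∀ j : Fin n, ρ j = (if j = i then ρ i else 0) + (j : ℕ) * ρ j := by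
      intro j
      by_cases hj : j = i
      · subst hj; simp [hi]
      · simp only [if_neg hj, zero_add]
        rcases Nat.lt_or_ge (j : ℕ) 2 with h | h
        · have hj1 : (j : ℕ) = 1 := by
            have : (j : ℕ) = 0 ∨ (j : ℕ) = 1 := by omega
            rcases this with h0 | h1
            · exact absurd (Fin.val_injective (h0.trans hi.symm)) hj
            · exact h1
          rw [hj1, one_mul]
        · rw [hρ j h]; simp
    calc ∑ j, ρ j = ∑ j : Fin n, ((if j = i then ρ i else 0) + (j : ℕ) * ρ j) :=
          Finset.sum_congr rfl fun j _ => step j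
      _ = ρ i + ∑ j : Fin n, (j : ℕ) * ρ j := by
          rw [Finset.sum_add_distrib]
          simp
  funext i
  rcases Nat.lt_or_ge (i : ℕ) 2 with h | h
  · have h01 : (i : ℕ) = 0 ∨ (i : ℕ) = 1 := by omega
    rcases h01 with h0 | h1
    · have k1 := key0 μ hμ i h0
      have k2 := key0 ν hν i h0
      omega
    · have k1 := key1 μ hμ i h1
      have k2 := key1 ν hν i h1
      omega
  · rw [hμ i h, hν i h]

lemma small_support_of_t (μ : Fin n → ℕ) (h : ∑ i : Fin n, (i : ℕ) * μ i ≤ 1) :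
    ∀ j : Fin n, 2 ≤ (j : ℕ) → μ j = 0 := by
  intro j hj
  by_contra hne
  have h1 : 1 ≤ μ j := Nat.one_le_iff_ne_zero.mpr hne
  have h2 : (j : ℕ) * μ j ≤ ∑ i : Fin n, (i : ℕ) * μ i :=
    Finset.single_le_sum (f := fun i : Fin n => (i : ℕ) * μ i)
      (fun i _ => Nat.zero_le _) (Finset.mem_univ j)
  have h3 : 2 * 1 ≤ (j : ℕ) * μ j := Nat.mul_le_mul hj h1
  omega

lemma eq_uv_of_sum_one (μ : Fin n → ℕ) (h : ∑ i, μ i = 1) : ∃ j, μ = uv j := by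
  have hne : ∑ i, μ i ≠ 0 := by omega
  obtain ⟨j, _, hj⟩ := Finset.exists_ne_zero_of_sum_ne_zero hne
  refine ⟨j, funext fun k => ?_⟩
  have hsplit := Finset.add_sum_erase Finset.univ μ (Finset.mem_univ j)
  by_cases hk : k = j
  · subst hk
    have h2 : μ k ≤ ∑ i, μ i :=
      Finset.single_le_sum (fun i _ => Nat.zero_le _) (Finset.mem_univ k)
    have h1 : 1 ≤ μ k := Nat.one_le_iff_ne_zero.mpr hj
    have : μ k = 1 := by omega
    simp [uv, this]
  · have hrest : ∑ i ∈ Finset.univ.erase j, μ i = 0 := by omega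
    have hk0 : μ k = 0 :=
      Finset.sum_eq_zero_iff.mp hrest k (Finset.mem_erase.mpr ⟨hk, Finset.mem_univ k⟩)
    simp [uv, hk, hk0]

def rvf (hn : 0 < n) : Fin n → Fin n := fun i => ⟨n - 1 - (i : ℕ), by omega⟩

lemma rvf_invol (hn : 0 < n) : Function.Involutive (rvf hn) := fun i => by
  have := i.isLt
  apply Fin.ext
  show n - 1 - (n - 1 - (i : ℕ)) = (i : ℕ)
  omega

lemma sum_comp_rv (hn : 0 < n) (f : Fin n → ℕ) :
    ∑ i, f (rvf hn i) = ∑ i, f i :=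
  Equiv.sum_comp (rvf_invol hn).toPerm f

lemma rev_t (hn : 0 < n) (μ : Fin n → ℕ) :
    (∑ i : Fin n, (i : ℕ) * μ (rvf hn i)) + ∑ i : Fin n, (i : ℕ) * μ i
      = (n - 1) * ∑ i, μ i := by
  have h1 : ∑ i : Fin n, (i : ℕ) * μ (rvf hn i)
      = ∑ i : Fin n, (n - 1 - (i : ℕ)) * μ i := by
    calc ∑ i : Fin n, (i : ℕ) * μ (rvf hn i)
        = ∑ i : Fin n, (rvf hn i : ℕ) * μ (rvf hn (rvf hn i)) :=
          (sum_comp_rv hn (fun i => (i : ℕ) * μ (rvf hn i))).symm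
      _ = ∑ i : Fin n, (n - 1 - (i : ℕ)) * μ i :=
          Finset.sum_congr rfl fun i _ => by rw [rvf_invol hn i]; rfl
  rw [h1, ← Finset.sum_add_distrib, Finset.mul_sum]
  refine Finset.sum_congr rfl fun i _ => ?_
  have := i.isLt
  have h2 : (n - 1 - (i : ℕ)) + (i : ℕ) = n - 1 := by omega
  rw [← Nat.add_mul, h2]

lemma key_bounds (μ ν : Fin n → ℕ) (hne : μ ≠ ν)
    (hs : ∑ i, μ i = ∑ i, ν i)
    (ht : ∑ i : Fin n, (i : ℕ) * μ i = ∑ i : Fin n, (i : ℕ) * ν i) :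
    2 ≤ ∑ i : Fin n, (i : ℕ) * μ i ∧
      (∑ i : Fin n, (i : ℕ) * μ i) + 2 ≤ (n - 1) * ∑ i, μ i ∧
      2 ≤ ∑ i, μ i ∧ 3 ≤ n := by
  have hn : 0 < n := by
    rcases Nat.eq_zero_or_pos n with h | h
    · subst h; exact absurd (funext fun i => i.elim0) hne
    · exact h
  have hT2 : 2 ≤ ∑ i : Fin n, (i : ℕ) * μ i := by
    by_contra hlt
    exact hne (eq_of_small_support μ ν (small_support_of_t μ (by omega))
      (small_support_of_t ν (by omega)) hs ht)
  have hne' : (fun i => μ (rvf hn i)) ≠ (fun i => ν (rvf hn i)) := by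
    intro h
    apply hne
    funext i
    have h2 := congrFun h (rvf hn i)
    simpa [rvf_invol hn i] using h2
  have hs' : ∑ i, μ (rvf hn i) = ∑ i, ν (rvf hn i) := by
    rw [sum_comp_rv, sum_comp_rv]; exact hs
  have hrμ := rev_t hn μ
  have hrν := rev_t hn ν
  rw [← hs] at hrν
  have ht' : ∑ i : Fin n, (i : ℕ) * μ (rvf hn i)
      = ∑ i : Fin n, (i : ℕ) * ν (rvf hn i) := by omega
  have hT2' : 2 ≤ ∑ i : Fin n, (i : ℕ) * μ (rvf hn i) := by
    by_contra hlt
    exact hne' (eq_of_small_support _ _ (small_support_of_t _ (by omega))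
      (small_support_of_t _ (by omega)) hs' ht')
  have hTle : (∑ i : Fin n, (i : ℕ) * μ i) + 2 ≤ (n - 1) * ∑ i, μ i := by omega
  have hn3 : 3 ≤ n := by
    by_contra hlt
    have hsup : ∀ j : Fin n, 2 ≤ (j : ℕ) → μ j = 0 := fun j hj =>
      absurd j.isLt (by omega)
    have hsup' : ∀ j : Fin n, 2 ≤ (j : ℕ) → ν j = 0 := fun j hj =>
      absurd j.isLt (by omega)
    exact hne (eq_of_small_support μ ν hsup hsup' hs ht)
  have hL2 : 2 ≤ ∑ i, μ i := by
    by_contra hlt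
    have h01 : ∑ i, μ i = 0 ∨ ∑ i, μ i = 1 := by omega
    rcases h01 with h | h
    · apply hne
      funext i
      have hμ0 := Finset.sum_eq_zero_iff.mp h i (Finset.mem_univ i)
      have hν0 := Finset.sum_eq_zero_iff.mp (hs.symm.trans h) i (Finset.mem_univ i)
      rw [hμ0, hν0]
    · obtain ⟨j, hj⟩ := eq_uv_of_sum_one μ h
      obtain ⟨k, hk⟩ := eq_uv_of_sum_one ν (hs.symm.trans h)
      have hjk : (j : ℕ) = (k : ℕ) := by
        have e1 : ∑ i : Fin n, (i : ℕ) * μ i = (j : ℕ) := by rw [hj, sum_t_uv]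
        have e2 : ∑ i : Fin n, (i : ℕ) * ν i = (k : ℕ) := by rw [hk, sum_t_uv]
        omega
      apply hne
      rw [hj, hk, Fin.val_injective hjk]
  exact ⟨hT2, hTle, hL2, hn3⟩

lemma exists_rep (hn : 0 < n) (L : ℕ) :
    ∀ T, T ≤ (n - 1) * L →
      ∃ μ : Fin n → ℕ, (∑ i, μ i = L) ∧ (∑ i : Fin n, (i : ℕ) * μ i = T) := by
  induction L with
  | zero =>
      intro T hT
      have hT0 : T = 0 := by simpa using hT
      exact ⟨0, by simp, by simp [hT0]⟩
  | succ L ih =>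
      intro T hT
      have hp : min T (n - 1) < n := by omega
      have hrec : T - min T (n - 1) ≤ (n - 1) * L := by
        have hx : (n - 1) * (L + 1) = (n - 1) * L + (n - 1) := by ring
        omega
      obtain ⟨μ, h1, h2⟩ := ih _ hrec
      refine ⟨fun i => μ i + uv ⟨min T (n - 1), hp⟩ i, ?_, ?_⟩
      · rw [Finset.sum_add_distrib, h1, sum_uv]
      · simp only [Nat.mul_add]
        rw [Finset.sum_add_distrib, h2, sum_t_uv]
        show T - min T (n - 1) + min T (n - 1) = T
        omega

lemma forward_arith (hn3 : 3 ≤ n) (L T : ℕ) (hT2 : 2 ≤ T) (hL2 : 2 ≤ L)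
    (hTle : T + 2 ≤ (n - 1) * L) :
    ∃ lam' L2 t', 2 ≤ lam' ∧ lam' ≤ 2 * n - 4 ∧ L = L2 + 2 ∧ T = lam' + t' ∧
      t' ≤ (n - 1) * L2 := by
  have hexp : (n - 1) * L = (n - 1) * (L - 2) + (n - 1) * 2 := by
    rw [← Nat.mul_add]
    congr 1
    omega
  by_cases hc : T ≤ 2 * n - 4
  · exact ⟨T, L - 2, 0, hT2, hc, by omega, by omega, by omega⟩
  · exact ⟨2 * n - 4, L - 2, T - (2 * n - 4), by omega, le_refl _, by omega, by omega, by omega⟩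

lemma pair_split (hn3 : 3 ≤ n) (lam' : ℕ) (h2 : 2 ≤ lam') (h4 : lam' ≤ 2 * n - 4) :
    ∃ a b a' b' : Fin n, (a : ℕ) + (b : ℕ) = lam' ∧ (a' : ℕ) + (b' : ℕ) = lam' ∧
      ∃ w : Fin n, uv a w + uv b w ≠ uv a' w + uv b' w := by
  by_cases hc : lam' ≤ n - 1
  · refine ⟨⟨lam', by omega⟩, ⟨0, by omega⟩, ⟨lam' - 1, by omega⟩, ⟨1, by omega⟩,
      by show lam' + 0 = lam'; omega, by show lam' - 1 + 1 = lam'; omega,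
      ⟨lam', by omega⟩, ?_⟩
    simp only [uv, Fin.mk.injEq]
    split_ifs <;> omega
  · refine ⟨⟨n - 1, by omega⟩, ⟨lam' - (n - 1), by omega⟩, ⟨n - 2, by omega⟩,
      ⟨lam' - (n - 2), by omega⟩,
      by show n - 1 + (lam' - (n - 1)) = lam'; omega,
      by show n - 2 + (lam' - (n - 2)) = lam'; omega,
      ⟨n - 1, by omega⟩, ?_⟩
    simp only [uv, Fin.mk.injEq]
    split_ifs <;> omega

end LSetAux

/-- **Proposition.** Let `S = ⟨m_1,…,m_n⟩ ⊆ ℕ` be a numerical semigroup minimally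
generated by an arithmetic sequence `m_i = m_1 + (i-1)e` of relatively prime integers
(`gcd(m_1,e) = 1`).  Then `L_S = {2m_1 + λe : 2 ≤ λ ≤ 2n - 4} + S`. -/
theorem LSet_arithmetic_sequence
    {n : ℕ} (m : Fin n → ℕ) (e : ℕ)
    (he : 0 < e)
    -- `m` is an arithmetic sequence `m_i = m_1 + (i-1) e` (0-based: `m i = m 0 + i*e`):
    (hm : ∀ i : Fin n, m i = m ⟨0, Fin.pos i⟩ + i * e)
    (hgcd : ∀ h0 : 0 < n, Nat.gcd (m ⟨0, h0⟩) e = 1)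
    -- `S` is a numerical semigroup:
    (hfin : {x : ℕ | x ∉ AddSubmonoid.closure (Set.range m)}.Finite)
    -- `{m_1,…,m_n}` is the minimal set of generators:
    (hmin : ∀ i, m i ∉ AddSubmonoid.closure (Set.range m \ {m i}))
    (h0 : 0 < n) :
    LSet m = {x | ∃ lam : ℕ, 2 ≤ lam ∧ lam ≤ 2 * n - 4 ∧
      ∃ y ∈ AddSubmonoid.closure (Set.range m), x = 2 * m ⟨0, h0⟩ + lam * e + y} := by
  classical
  open LSetAux in
  have hm' : ∀ i : Fin n, m i = m ⟨0, h0⟩ + (i : ℕ) * e := fun i => hm i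
  set m0 : ℕ := m ⟨0, h0⟩ with hm0def
  ext x
  simp only [LSet, Set.mem_setOf_eq]
  constructor
  · rintro ⟨lam, nu, hne, hdl, hdn, hs⟩
    have h1 := LSetAux.deg_eq m m0 e hm' lam
    have h2 := LSetAux.deg_eq m m0 e hm' nu
    rw [hdl] at h1
    rw [hdn] at h2
    rw [← hs] at h2
    -- equal t
    have hTT : ∑ i : Fin n, (i : ℕ) * lam i = ∑ i : Fin n, (i : ℕ) * nu i := by
      have h3 : (∑ i : Fin n, (i : ℕ) * lam i) * e = (∑ i : Fin n, (i : ℕ) * nu i) * e := by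
        omega
      exact Nat.eq_of_mul_eq_mul_right he h3
    obtain ⟨hT2, hTle, hL2, hn3⟩ := LSetAux.key_bounds lam nu hne hs hTT
    obtain ⟨lam', L2, t', hl2, hl4, hLeq, hTeq, ht'⟩ :=
      LSetAux.forward_arith hn3 (∑ i, lam i) (∑ i : Fin n, (i : ℕ) * lam i) hT2 hL2 hTle
    obtain ⟨μ, hμ1, hμ2⟩ := LSetAux.exists_rep h0 L2 t' ht'
    refine ⟨lam', hl2, hl4, degS m μ, LSetAux.deg_mem m μ, ?_⟩
    have h4 := LSetAux.deg_eq m m0 e hm' μ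
    rw [hμ1, hμ2] at h4
    rw [h4, h1, hLeq, hTeq]
    ring
  · rintro ⟨lam', h2, h4, y, hy, rfl⟩
    have hn3 : 3 ≤ n := by omega
    obtain ⟨μ, hμ⟩ := LSetAux.exists_deg m hy
    obtain ⟨a, b, a', b', hab, hab', w, hw⟩ := LSetAux.pair_split hn3 lam' h2 h4
    refine ⟨fun i => μ i + (LSetAux.uv a i + LSetAux.uv b i),
      fun i => μ i + (LSetAux.uv a' i + LSetAux.uv b' i), ?_, ?_, ?_, ?_⟩
    · intro h
      have := congrFun h w
      omega
    · have hsum : ∑ i, (μ i + (LSetAux.uv a i + LSetAux.uv b i)) = (∑ i, μ i) + 2 := by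
        rw [Finset.sum_add_distrib, Finset.sum_add_distrib, LSetAux.sum_uv, LSetAux.sum_uv]
      have htsum : ∑ i : Fin n, (i : ℕ) * (μ i + (LSetAux.uv a i + LSetAux.uv b i))
          = (∑ i : Fin n, (i : ℕ) * μ i) + lam' := by
        simp only [Nat.mul_add]
        rw [Finset.sum_add_distrib, Finset.sum_add_distrib,
          LSetAux.sum_t_uv, LSetAux.sum_t_uv, ← hab]
      rw [LSetAux.deg_eq m m0 e hm' _, hsum, htsum]
      have hyv := LSetAux.deg_eq m m0 e hm' μ
      rw [hμ] at hyv
      rw [hyv]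
      ring
    · have hsum : ∑ i, (μ i + (LSetAux.uv a' i + LSetAux.uv b' i)) = (∑ i, μ i) + 2 := by
        rw [Finset.sum_add_distrib, Finset.sum_add_distrib, LSetAux.sum_uv, LSetAux.sum_uv]
      have htsum : ∑ i : Fin n, (i : ℕ) * (μ i + (LSetAux.uv a' i + LSetAux.uv b' i))
          = (∑ i : Fin n, (i : ℕ) * μ i) + lam' := by
        simp only [Nat.mul_add]
        rw [Finset.sum_add_distrib, Finset.sum_add_distrib,
          LSetAux.sum_t_uv, LSetAux.sum_t_uv, ← hab']
      rw [LSetAux.deg_eq m m0 e hm' _, hsum, htsum]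
      have hyv := LSetAux.deg_eq m m0 e hm' μ
      rw [hμ] at hyv
      rw [hyv]
      ring
    · rw [Finset.sum_add_distrib, Finset.sum_add_distrib,
        Finset.sum_add_distrib, Finset.sum_add_distrib,
        LSetAux.sum_uv, LSetAux.sum_uv, LSetAux.sum_uv, LSetAux.sum_uv]
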